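/- Let F ∈ 𝓗₊ ∪ 𝓗₋, η > 0, r_F := log F*(1,1) > 0, and M_F^{(η)} := max{Γ_F^{(1+η,1)}, Γ_F^{(0,2+η)}}. Then for all a ∈ [0, 1+η] and b ∈ [1, 2+η], one has Γ_F^{(a,b)} ≤ 2 M_F^{(η)} / (r_F)^{2+η−a−b}. -/

import Mathlib

open MeasureTheory Filter Set Real
open scoped Classical

/-- The class 𝓗₊. -/
def HPlus (F : ℝ → ℝ → ℝ) : Prop :=
  ContinuousOn (fun p : ℝ × ℝ => F p.1 p.2) {p | 0 < p.1 ∧ 0 < p.2} ∧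
  (∀ x y, 0 < x → 0 < y → 0 < F x y) ∧
  (∀ x x' y y', 0 < x → 0 < y → x ≤ x' → y ≤ y' → F x y ≤ F x' y') ∧
  (∀ a x y, 0 < a → 0 < x → 0 < y → F (a * x) (a * y) = a * F x y) ∧
  (∀ x y, 0 < x → 0 < y → max x y ≤ F x y) ∧
  (∀ y, 0 < y →
    Tendsto (fun x => F x y) (nhdsWithin 0 (Set.Ioi 0)) (nhds y) ∧
    Tendsto (fun x => F y x) (nhdsWithin 0 (Set.Ioi 0)) (nhds y))

/-- The class 𝓗₋. -/
def HMinus (F : ℝ → ℝ → ℝ) : Prop :=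
  ContinuousOn (fun p : ℝ × ℝ => F p.1 p.2) {p | 0 < p.1 ∧ 0 < p.2} ∧
  (∀ x y, 0 < x → 0 < y → 0 < F x y) ∧
  (∀ x x' y y', 0 < x → 0 < y → x ≤ x' → y ≤ y' → F x y ≤ F x' y') ∧
  (∀ a x y, 0 < a → 0 < x → 0 < y → F (a * x) (a * y) = a * F x y) ∧
  (∀ x y, 0 < x → 0 < y → F x y ≤ min x y) ∧
  (∀ y, 0 < y →
    Tendsto (fun x => F x y) atTop (nhds y) ∧
    Tendsto (fun x => F y x) atTop (nhds y))

/-- The associated element F* of 𝓗₊. -/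
noncomputable def Fstar (F : ℝ → ℝ → ℝ) : ℝ → ℝ → ℝ :=
  if HPlus F then F else fun x y => (F x⁻¹ y⁻¹)⁻¹

/-- T_F(t) := sup { z : F*(e^{-t}, e^{-z}) ≥ 1 }. -/
noncomputable def TF (F : ℝ → ℝ → ℝ) (t : ℝ) : ℝ :=
  sSup {z : ℝ | 1 ≤ Fstar F (Real.exp (-t)) (Real.exp (-z))}

/-- T_F^-(t) := inf { z : F*(e^{-t}, e^{-z}) ≤ 1 }. -/
noncomputable def TFminus (F : ℝ → ℝ → ℝ) (t : ℝ) : ℝ :=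
  sInf {z : ℝ | Fstar F (Real.exp (-t)) (Real.exp (-z)) ≤ 1}

/-- r_F := log F*(1,1). -/
noncomputable def rF (F : ℝ → ℝ → ℝ) : ℝ := Real.log (Fstar F 1 1)

/-- Γ_F^{(a,b)} := ∫₀^∞ t^a (T_F(t))^b dt, as an extended nonnegative real. -/
noncomputable def Gamma (F : ℝ → ℝ → ℝ) (a b : ℝ) : ENNReal :=
  ∫⁻ t in Set.Ioi (0 : ℝ), ENNReal.ofReal (t ^ a * (TF F t) ^ b)

/-- F^#(x,y) := F(y,x). -/
def Fsharp (F : ℝ → ℝ → ℝ) : ℝ → ℝ → ℝ := fun x y => F y x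

/-- If r_F > 0 then for a ∈ [0,1+η], b ∈ [1,2+η]:
Γ_F^{(a,b)} ≤ 2 M_F^{(η)} / r_F^{2+η−a−b}, where M_F^{(η)} = max{Γ_F^{(1+η,1)}, Γ_F^{(0,2+η)}}. -/
structure GoodStar (G : ℝ → ℝ → ℝ) : Prop where
  pos : ∀ x y, 0 < x → 0 < y → 0 < G x y
  mono : ∀ x x' y y', 0 < x → 0 < y → x ≤ x' → y ≤ y' → G x y ≤ G x' y'
  homog : ∀ a x y, 0 < a → 0 < x → 0 < y → G (a * x) (a * y) = a * G x y
  maxle : ∀ x y, 0 < x → 0 < y → max x y ≤ G x y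
  tail : ∀ y, 0 < y → y < 1 → ∃ u, 0 < u ∧ G y u < 1


lemma goodStar_Fstar (F : ℝ → ℝ → ℝ) (hF : HPlus F ∨ HMinus F) : GoodStar (Fstar F) := by
  by_cases hp : HPlus F
  · rw [Fstar, if_pos hp]
    obtain ⟨-, hpos, hmono, hhom, hmax, hlim⟩ := hp
    refine ⟨hpos, hmono, hhom, hmax, ?_⟩
    intro y hy hy1
    have h1 : ∀ᶠ u in nhdsWithin (0:ℝ) (Set.Ioi 0), F y u < 1 :=
      ((hlim y hy).2).eventually_lt_const hy1
    have h2 : ∀ᶠ u in nhdsWithin (0:ℝ) (Set.Ioi 0), u ∈ Set.Ioi (0:ℝ) :=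
      self_mem_nhdsWithin
    obtain ⟨u, hu1, hu2⟩ := (h1.and h2).exists
    exact ⟨u, hu2, hu1⟩
  · have hm := hF.resolve_left hp
    rw [Fstar, if_neg hp]
    obtain ⟨-, hpos, hmono, hhom, hmin, hlim⟩ := hm
    refine ⟨?_, ?_, ?_, ?_, ?_⟩
    · intro x y hx hy
      exact inv_pos.mpr (hpos _ _ (inv_pos.mpr hx) (inv_pos.mpr hy))
    · intro x x' y y' hx hy hxx hyy
      have hx' : (0:ℝ) < x' := lt_of_lt_of_le hx hxx
      have hy' : (0:ℝ) < y' := lt_of_lt_of_le hy hyy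
      have h1 : F x'⁻¹ y'⁻¹ ≤ F x⁻¹ y⁻¹ :=
        hmono _ _ _ _ (inv_pos.mpr hx') (inv_pos.mpr hy')
          (inv_anti₀ hx hxx) (inv_anti₀ hy hyy)
      have h2 : 0 < F x'⁻¹ y'⁻¹ := hpos _ _ (inv_pos.mpr hx') (inv_pos.mpr hy')
      exact inv_anti₀ h2 h1
    · intro c x y hc hx hy
      rw [mul_inv, mul_inv, hhom c⁻¹ x⁻¹ y⁻¹ (inv_pos.mpr hc) (inv_pos.mpr hx) (inv_pos.mpr hy),
        mul_inv, inv_inv]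
    · intro x y hx hy
      have h1 : F x⁻¹ y⁻¹ ≤ (max x y)⁻¹ := by
        refine (hmin _ _ (inv_pos.mpr hx) (inv_pos.mpr hy)).trans_eq ?_
        rcases le_total x y with h | h
        · rw [max_eq_right h, min_eq_right (inv_anti₀ hx h)]
        · rw [max_eq_left h, min_eq_left (inv_anti₀ hy h)]
      have h2 : 0 < F x⁻¹ y⁻¹ := hpos _ _ (inv_pos.mpr hx) (inv_pos.mpr hy)
      calc max x y = ((max x y)⁻¹)⁻¹ := (inv_inv _).symm
        _ ≤ (F x⁻¹ y⁻¹)⁻¹ := inv_anti₀ h2 h1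
    · intro y hy hy1
      have hyi : (1:ℝ) < y⁻¹ := (one_lt_inv₀ hy).mpr hy1
      have h1 : ∀ᶠ u in atTop, 1 < F y⁻¹ u :=
        ((hlim y⁻¹ (inv_pos.mpr hy)).2).eventually_const_lt hyi
      obtain ⟨u, hu1, hu2⟩ := (h1.and (eventually_ge_atTop (1:ℝ))).exists
      refine ⟨u⁻¹, inv_pos.mpr (by linarith), ?_⟩
      simp only [inv_inv]
      exact inv_lt_one_of_one_lt₀ hu1

section TFsec
variable {G : ℝ → ℝ → ℝ} (hG : GoodStar G)

noncomputable def rr (G : ℝ → ℝ → ℝ) : ℝ := Real.log (G 1 1)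

def SS (G : ℝ → ℝ → ℝ) (t : ℝ) : Set ℝ := {z : ℝ | 1 ≤ G (Real.exp (-t)) (Real.exp (-z))}

lemma G_diag (hG : GoodStar G) {x : ℝ} (hx : 0 < x) : G x x = x * Real.exp (rr G) := by
  have h11 : (0:ℝ) < G 1 1 := hG.pos 1 1 one_pos one_pos
  have := hG.homog x 1 1 hx one_pos one_pos
  rw [mul_one] at this
  rw [this, rr, Real.exp_log h11]

lemma SS_bddAbove (hG : GoodStar G) {t : ℝ} (ht : 0 < t) : BddAbove (SS G t) := by
  have hy : (0:ℝ) < Real.exp (-t) := Real.exp_pos _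
  have hy1 : Real.exp (-t) < 1 := Real.exp_lt_one_iff.mpr (by linarith)
  obtain ⟨u, hu, hGu⟩ := hG.tail _ hy hy1
  refine ⟨-Real.log u, fun z hz => ?_⟩
  by_contra h
  push_neg at h
  have hez : Real.exp (-z) < u := by
    rw [← Real.exp_log hu]
    exact Real.exp_lt_exp.mpr (by linarith)
  have : G (Real.exp (-t)) (Real.exp (-z)) ≤ G (Real.exp (-t)) u :=
    hG.mono _ _ _ _ hy (Real.exp_pos _) le_rfl hez.le
  have h1 : (1:ℝ) ≤ G (Real.exp (-t)) (Real.exp (-z)) := hz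
  linarith

lemma SS_zero_mem (hG : GoodStar G) {t : ℝ} (ht : 0 < t) : (0:ℝ) ∈ SS G t := by
  have : (1:ℝ) ≤ max (Real.exp (-t)) 1 := le_max_right _ _
  have h2 := hG.maxle (Real.exp (-t)) 1 (Real.exp_pos _) one_pos
  simp only [SS, Set.mem_setOf_eq, neg_zero, Real.exp_zero]
  linarith

lemma TFa_nonneg (hG : GoodStar G) {t : ℝ} (ht : 0 < t) : 0 ≤ sSup (SS G t) :=
  le_csSup (SS_bddAbove hG ht) (SS_zero_mem hG ht)

lemma TFa_ge (hG : GoodStar G) {t : ℝ} (ht : 0 < t) (htr : t ≤ rr G) : rr G ≤ sSup (SS G t) := by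
  refine le_csSup (SS_bddAbove hG ht) ?_
  have h1 : Real.exp (-(rr G)) ≤ Real.exp (-t) := Real.exp_le_exp.mpr (by linarith)
  have h2 : G (Real.exp (-(rr G))) (Real.exp (-(rr G))) ≤ G (Real.exp (-t)) (Real.exp (-(rr G))) :=
    hG.mono _ _ _ _ (Real.exp_pos _) (Real.exp_pos _) h1 le_rfl
  have h3 : G (Real.exp (-(rr G))) (Real.exp (-(rr G))) = 1 := by
    rw [G_diag hG (Real.exp_pos _), ← Real.exp_add]
    simp
  show (1:ℝ) ≤ _
  linarith [h3 ▸ h2]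

lemma TFa_le (hG : GoodStar G) {t : ℝ} (hr : 0 < rr G) (htr : rr G < t) :
    sSup (SS G t) ≤ rr G := by
  have ht : 0 < t := hr.trans htr
  refine csSup_le ⟨0, SS_zero_mem hG ht⟩ fun z hz => ?_
  by_contra h
  push_neg at h
  set m := min t z with hm
  have hrm : rr G < m := lt_min htr h
  have h1 : G (Real.exp (-t)) (Real.exp (-z)) ≤ G (Real.exp (-m)) (Real.exp (-m)) :=
    hG.mono _ _ _ _ (Real.exp_pos _) (Real.exp_pos _)
      (Real.exp_le_exp.mpr (by simp [hm, min_le_left])) 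
      (Real.exp_le_exp.mpr (by simp [hm, min_le_right]))
  have h2 : G (Real.exp (-m)) (Real.exp (-m)) = Real.exp (rr G - m) := by
    rw [G_diag hG (Real.exp_pos _), ← Real.exp_add]
    ring_nf
  have h3 : Real.exp (rr G - m) < 1 := Real.exp_lt_one_iff.mpr (by linarith)
  have h4 : (1:ℝ) ≤ G (Real.exp (-t)) (Real.exp (-z)) := hz
  linarith

end TFsec

lemma realbound1 {r t T η a b : ℝ} (hr : 0 < r) (ht : 0 < t) (htr : t ≤ r)
    (hT : r ≤ T) (ha0 : 0 ≤ a) (hb2 : b ≤ 2 + η) :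
    r ^ (2 + η - a - b) * (t ^ a * T ^ b) ≤ T ^ (2 + η) := by
  have hT0 : 0 < T := hr.trans_le hT
  have h1 : t ^ a ≤ r ^ a := Real.rpow_le_rpow ht.le htr ha0
  have h2 : T ^ b = T ^ (2+η) * T ^ (b - (2+η)) := by
    rw [← Real.rpow_add hT0]; ring_nf
  have h3 : T ^ (b - (2+η)) ≤ r ^ (b - (2+η)) :=
    Real.rpow_le_rpow_of_nonpos hr hT (by linarith)
  calc r ^ (2+η-a-b) * (t^a * T^b)
      = r ^ (2+η-a-b) * (t^a * (T^(2+η) * T^(b-(2+η)))) := by rw [← h2]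
    _ ≤ r ^ (2+η-a-b) * (r^a * (T^(2+η) * r^(b-(2+η)))) := by
        have hrp : (0:ℝ) < r ^ (2+η-a-b) := Real.rpow_pos_of_pos hr _
        gcongr
    _ = T ^ (2+η) * (r ^ (2+η-a-b) * r^a * r^(b-(2+η))) := by ring
    _ = T ^ (2+η) := by
        rw [← Real.rpow_add hr, ← Real.rpow_add hr]
        have : (2+η-a-b) + a + (b-(2+η)) = 0 := by ring
        rw [this, Real.rpow_zero, mul_one]

lemma realbound2 {r t T η a b : ℝ} (hr : 0 < r) (htr : r < t)
    (hT0 : 0 ≤ T) (hTr : T ≤ r) (ha1 : a ≤ 1 + η) (hb1 : 1 ≤ b) :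
    r ^ (2 + η - a - b) * (t ^ a * T ^ b) ≤ t ^ (1 + η) * T := by
  have ht0 : 0 < t := hr.trans htr
  rcases hT0.eq_or_lt with h0 | hT0'
  · rw [← h0, Real.zero_rpow (by linarith : b ≠ 0)]
    simp
  · have h1 : t ^ a = t^(1+η) * t^(a-(1+η)) := by rw [← Real.rpow_add ht0]; ring_nf
    have h2 : t^(a-(1+η)) ≤ r^(a-(1+η)) :=
      Real.rpow_le_rpow_of_nonpos hr htr.le (by linarith)
    have h3 : T^b = T^(1:ℝ) * T^(b-1) := by rw [← Real.rpow_add hT0']; ring_nf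
    have h4 : T^(b-1) ≤ r^(b-1) := Real.rpow_le_rpow hT0 hTr (by linarith)
    calc r ^ (2+η-a-b) * (t^a * T^b)
        = r^(2+η-a-b) * ((t^(1+η) * t^(a-(1+η))) * (T^(1:ℝ) * T^(b-1))) := by rw [← h1, ← h3]
      _ ≤ r^(2+η-a-b) * ((t^(1+η) * r^(a-(1+η))) * (T^(1:ℝ) * r^(b-1))) := by
          gcongr
      _ = (t^(1+η) * T^(1:ℝ)) * (r^(2+η-a-b) * r^(a-(1+η)) * r^(b-1)) := by ring
      _ = t^(1+η) * T := by
          rw [← Real.rpow_add hr, ← Real.rpow_add hr]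
          have : (2+η-a-b) + (a-(1+η)) + (b-1) = 0 := by ring
          rw [this, Real.rpow_zero, mul_one, Real.rpow_one]


theorem stmt11 (F : ℝ → ℝ → ℝ) (hF : HPlus F ∨ HMinus F) (η : ℝ) (hη : 0 < η)
    (hr : 0 < rF F) (a b : ℝ) (ha0 : 0 ≤ a) (ha1 : a ≤ 1 + η)
    (hb1 : 1 ≤ b) (hb2 : b ≤ 2 + η) :
    Gamma F a b ≤
      2 * max (Gamma F (1 + η) 1) (Gamma F 0 (2 + η)) /
        ENNReal.ofReal (rF F ^ (2 + η - a - b)) := by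
  have hP := goodStar_Fstar F hF
  have hrr : rr (Fstar F) = rF F := rfl
  have hTF : ∀ t : ℝ, TF F t = sSup (SS (Fstar F) t) := fun t => rfl
  set r := rF F with hrdef
  have hre : (0:ℝ) < r ^ (2+η-a-b) := Real.rpow_pos_of_pos hr _
  have hc0 : ENNReal.ofReal (r ^ (2+η-a-b)) ≠ 0 := (ENNReal.ofReal_pos.mpr hre).ne'
  rw [ENNReal.le_div_iff_mul_le (Or.inl hc0) (Or.inl ENNReal.ofReal_ne_top)]
  have key : Gamma F a b * ENNReal.ofReal (r ^ (2+η-a-b))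
      = ∫⁻ t in Set.Ioi (0:ℝ), ENNReal.ofReal (r ^ (2+η-a-b) * (t ^ a * TF F t ^ b)) := by
    rw [show _root_.Gamma F a b = ∫⁻ t in Set.Ioi (0:ℝ), ENNReal.ofReal (t ^ a * TF F t ^ b) from rfl,
      mul_comm, ← lintegral_const_mul' _ _ ENNReal.ofReal_ne_top]
    congr 1
    funext t
    rw [← ENNReal.ofReal_mul hre.le]
  rw [key, show Set.Ioi (0:ℝ) = Set.Ioc 0 r ∪ Set.Ioi r from (Set.Ioc_union_Ioi_eq_Ioi hr.le).symm,
    lintegral_union measurableSet_Ioi (Set.Ioc_disjoint_Ioi le_rfl)]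
  have hg2 : Gamma F 0 (2+η) = ∫⁻ t in Set.Ioi (0:ℝ), ENNReal.ofReal (TF F t ^ (2+η)) := by
    simp only [_root_.Gamma, Real.rpow_zero, one_mul]
  have hg1 : Gamma F (1+η) 1 = ∫⁻ t in Set.Ioi (0:ℝ), ENNReal.ofReal (t ^ (1+η) * TF F t) := by
    simp only [_root_.Gamma, Real.rpow_one]
  have h1 : (∫⁻ t in Set.Ioc 0 r, ENNReal.ofReal (r ^ (2+η-a-b) * (t ^ a * TF F t ^ b)))
      ≤ Gamma F 0 (2+η) := by
    rw [hg2]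
    refine le_trans (setLIntegral_mono' measurableSet_Ioc fun t ht => ?_)
      (lintegral_mono_set Set.Ioc_subset_Ioi_self)
    apply ENNReal.ofReal_le_ofReal
    have hge : r ≤ TF F t := by
      rw [hTF t, ← hrr]
      exact TFa_ge hP ht.1 (by rw [hrr]; exact ht.2)
    exact realbound1 hr ht.1 ht.2 hge ha0 hb2
  have h2 : (∫⁻ t in Set.Ioi r, ENNReal.ofReal (r ^ (2+η-a-b) * (t ^ a * TF F t ^ b)))
      ≤ Gamma F (1+η) 1 := by
    rw [hg1]
    refine le_trans (setLIntegral_mono' measurableSet_Ioi fun t ht => ?_)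
      (lintegral_mono_set (Set.Ioi_subset_Ioi hr.le))
    apply ENNReal.ofReal_le_ofReal
    have ht' : r < t := ht
    have hr' : 0 < rr (Fstar F) := by rw [hrr]; exact hr
    have h0 : 0 ≤ TF F t := by rw [hTF t]; exact TFa_nonneg hP (hr.trans ht')
    have hle : TF F t ≤ r := by
      rw [hTF t, ← hrr]
      exact TFa_le hP hr' (by rw [hrr]; exact ht')
    exact realbound2 hr ht' h0 hle ha1 hb1
  calc (∫⁻ t in Set.Ioc 0 r, ENNReal.ofReal (r ^ (2+η-a-b) * (t ^ a * TF F t ^ b)))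
        + (∫⁻ t in Set.Ioi r, ENNReal.ofReal (r ^ (2+η-a-b) * (t ^ a * TF F t ^ b)))
      ≤ Gamma F 0 (2+η) + Gamma F (1+η) 1 := add_le_add h1 h2
    _ ≤ max (Gamma F (1+η) 1) (Gamma F 0 (2+η)) + max (Gamma F (1+η) 1) (Gamma F 0 (2+η)) :=
        add_le_add (le_max_right _ _) (le_max_left _ _)
    _ = 2 * max (Gamma F (1+η) 1) (Gamma F 0 (2+η)) := (two_mul _).symm
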